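/- Fix μ ∈ (0,2), K > 0 and λ ≥ 0, and define f_λ(x) = (λ + K⟨x⟩^{-μ})^{1/2} on ℝ^d, where ⟨x⟩ = (|x|²+1)^{1/2}. Then for every s ∈ ℝ and every multi-index α there is a constant C_α = C_α(s, μ, K) > 0, independent of λ ≥ 0, such that |∂_x^α (f_λ(x)^s)| ≤ C_α f_λ(x)^s ⟨x⟩^{-|α|} for all x ∈ ℝ^d. -/

import Mathlib

noncomputable section

/-- The Japanese bracket `⟨x⟩ = (|x|² + 1)^{1/2}` on `ℝ^d`. -/
def jap {d : ℕ} (x : EuclideanSpace ℝ (Fin d)) : ℝ := Real.sqrt (‖x‖ ^ 2 + 1)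

open Real Filter Set

set_option maxHeartbeats 1000000
set_option synthInstance.maxHeartbeats 1000000

namespace S10

noncomputable def aco (s μ : ℝ) : ℕ → ℕ → ℝ
  | 0 => fun k => if k = 0 then 1 else 0
  | (i+1) => fun k =>
      match k with
      | 0 => (-(i:ℝ)) * aco s μ i 0
      | (k+1) => (s/2 - (k:ℝ)) * (-(μ/2)) * aco s μ i k
          + (-(μ/2)*((k:ℝ)+1) - (i:ℝ)) * aco s μ i (k+1)

lemma aco_eq_zero (s μ : ℝ) : ∀ i k, i < k → aco s μ i k = 0 := by
  intro i
  induction i with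
  | zero => intro k hk; simp [aco]; omega
  | succ i ih =>
    intro k hk
    match k, hk with
    | (k+1), hk =>
      show (s/2 - (k:ℝ)) * (-(μ/2)) * aco s μ i k
          + (-(μ/2)*((k:ℝ)+1) - (i:ℝ)) * aco s μ i (k+1) = 0
      rw [ih k (by omega), ih (k+1) (by omega)]
      ring



/-- basic term: `a * U^(s/2-k) * W^k * t^(-i)` with `U = lam + K t^(-μ/2)`, `W = K t^(-μ/2)`. -/
def T (s μ K lam : ℝ) (a : ℝ) (k i : ℕ) (t : ℝ) : ℝ :=
  a * (lam + K * t ^ (-(μ/2))) ^ (s/2 - (k:ℝ)) * (K * t ^ (-(μ/2)))^k * t ^ (-(i:ℝ))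

lemma hasDerivAt_T (s μ K lam : ℝ) (hK : 0 < K) (hlam : 0 ≤ lam)
    (a : ℝ) (k i : ℕ) {t : ℝ} (ht : 0 < t) :
    HasDerivAt (T s μ K lam a k i)
      (T s μ K lam ((s/2 - (k:ℝ)) * (-(μ/2)) * a) (k+1) (i+1) t
        + T s μ K lam ((-(μ/2) * (k:ℝ) - (i:ℝ)) * a) k (i+1) t) t := by
  have hP : (0:ℝ) < t ^ (-(μ/2)) := rpow_pos_of_pos ht _
  have hW : (0:ℝ) < K * t ^ (-(μ/2)) := by positivity
  have hU : (0:ℝ) < lam + K * t ^ (-(μ/2)) := by positivity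
  have hw : HasDerivAt (fun t : ℝ => K * t ^ (-(μ/2)))
      (K * (-(μ/2) * t ^ (-(μ/2) - 1))) t :=
    (Real.hasDerivAt_rpow_const (Or.inl ht.ne')).const_mul K
  have hu : HasDerivAt (fun t : ℝ => lam + K * t ^ (-(μ/2)))
      (K * (-(μ/2) * t ^ (-(μ/2) - 1))) t := hw.const_add lam
  have h1 : HasDerivAt (fun t : ℝ => (lam + K * t ^ (-(μ/2))) ^ (s/2 - (k:ℝ)))
      ((K * (-(μ/2) * t ^ (-(μ/2) - 1))) * (s/2 - (k:ℝ))
        * (lam + K * t ^ (-(μ/2))) ^ (s/2 - (k:ℝ) - 1)) t :=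
    hu.rpow_const (Or.inl hU.ne')
  have h2 : HasDerivAt (fun t : ℝ => (K * t ^ (-(μ/2)))^k)
      ((k:ℝ) * (K * t ^ (-(μ/2)))^(k-1) * (K * (-(μ/2) * t ^ (-(μ/2) - 1)))) t := hw.pow k
  have h3 : HasDerivAt (fun t : ℝ => t ^ (-(i:ℝ))) ((-(i:ℝ)) * t ^ (-(i:ℝ) - 1)) t :=
    Real.hasDerivAt_rpow_const (Or.inl ht.ne')
  have h := (((h1.const_mul a).mul h2).mul h3)
  refine h.congr_deriv ?_
  unfold T
  simp only [Pi.mul_apply]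
  -- rewrite composite exponents
  have eP : t ^ (-(μ/2) - 1) = t ^ (-(μ/2)) * t⁻¹ := by
    rw [Real.rpow_sub ht, Real.rpow_one, div_eq_mul_inv]
  have eU : (lam + K * t ^ (-(μ/2))) ^ (s/2 - ((k:ℝ)+1))
      = (lam + K * t ^ (-(μ/2))) ^ (s/2 - (k:ℝ)) * (lam + K * t ^ (-(μ/2)))⁻¹ := by
    rw [show s/2 - ((k:ℝ)+1) = (s/2 - (k:ℝ)) - 1 by ring, Real.rpow_sub hU, Real.rpow_one,
      div_eq_mul_inv]
  have eU' : (lam + K * t ^ (-(μ/2))) ^ (s/2 - (k:ℝ) - 1)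
      = (lam + K * t ^ (-(μ/2))) ^ (s/2 - (k:ℝ)) * (lam + K * t ^ (-(μ/2)))⁻¹ := by
    rw [Real.rpow_sub hU, Real.rpow_one, div_eq_mul_inv]
  have eT : t ^ (-(i:ℝ) - 1) = t ^ (-(i:ℝ)) * t⁻¹ := by
    rw [Real.rpow_sub ht, Real.rpow_one, div_eq_mul_inv]
  have eTi : t ^ (-((i:ℝ)+1)) = t ^ (-(i:ℝ)) * t⁻¹ := by
    rw [show -((i:ℝ)+1) = -(i:ℝ) - 1 by ring]; exact eT
  push_cast
  rw [eU, eU', eT, eTi, eP, pow_succ]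
  have hUne := hU.ne'
  have htne := ht.ne'
  cases k with
  | zero => push_cast; field_simp; ring
  | succ k =>
    push_cast
    field_simp
    ring


lemma T_add (s μ K lam a b : ℝ) (k i : ℕ) (t : ℝ) :
    T s μ K lam (a + b) k i t = T s μ K lam a k i t + T s μ K lam b k i t := by
  unfold T; ring

lemma iteratedDeriv_formula (s μ K lam : ℝ) (hK : 0 < K) (hlam : 0 ≤ lam) (i : ℕ) :
    ∀ t ∈ Ioi (0:ℝ),
      iteratedDeriv i (fun t : ℝ => (lam + K * t ^ (-(μ/2))) ^ (s/2)) t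
        = ∑ k ∈ Finset.range (i+1), T s μ K lam (aco s μ i k) k i t := by
  induction i with
  | zero =>
    intro t ht
    simp [T, aco]
  | succ i ih =>
    intro t ht
    rw [iteratedDeriv_succ]
    have hev : iteratedDeriv i (fun t : ℝ => (lam + K * t ^ (-(μ/2))) ^ (s/2))
        =ᶠ[nhds t] fun t => ∑ k ∈ Finset.range (i+1), T s μ K lam (aco s μ i k) k i t := by
      filter_upwards [Ioi_mem_nhds ht] with y hy using ih y hy
    rw [hev.deriv_eq]
    have hD : HasDerivAt (fun t => ∑ k ∈ Finset.range (i+1), T s μ K lam (aco s μ i k) k i t)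
        (∑ k ∈ Finset.range (i+1),
          (T s μ K lam ((s/2 - (k:ℝ)) * (-(μ/2)) * aco s μ i k) (k+1) (i+1) t
            + T s μ K lam ((-(μ/2) * (k:ℝ) - (i:ℝ)) * aco s μ i k) k (i+1) t)) t :=
      HasDerivAt.fun_sum fun k _ => hasDerivAt_T s μ K lam hK hlam _ k i ht
    rw [hD.deriv]
    -- now a pure Finset identity
    rw [Finset.sum_add_distrib]
    rw [Finset.sum_range_succ'
      (fun k => T s μ K lam (aco s μ (i+1) k) k (i+1) t) (i+1)]
    rw [Finset.sum_range_succ'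
      (fun k => T s μ K lam ((-(μ/2) * (k:ℝ) - (i:ℝ)) * aco s μ i k) k (i+1) t) i]
    have e1 : ∑ k ∈ Finset.range (i+1), T s μ K lam (aco s μ (i+1) (k+1)) (k+1) (i+1) t
        = ∑ k ∈ Finset.range (i+1),
            (T s μ K lam ((s/2 - (k:ℝ)) * (-(μ/2)) * aco s μ i k) (k+1) (i+1) t
             + T s μ K lam ((-(μ/2)*((k:ℝ)+1) - (i:ℝ)) * aco s μ i (k+1)) (k+1) (i+1) t) := by
      refine Finset.sum_congr rfl fun k _ => ?_
      rw [show aco s μ (i+1) (k+1) = (s/2 - (k:ℝ)) * (-(μ/2)) * aco s μ i k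
          + (-(μ/2)*((k:ℝ)+1) - (i:ℝ)) * aco s μ i (k+1) from rfl, T_add]
    rw [e1, Finset.sum_add_distrib]
    have e2 : ∑ k ∈ Finset.range (i+1),
        T s μ K lam ((-(μ/2)*((k:ℝ)+1) - (i:ℝ)) * aco s μ i (k+1)) (k+1) (i+1) t
        = ∑ k ∈ Finset.range i,
            T s μ K lam ((-(μ/2) * ((k+1 : ℕ):ℝ) - (i:ℝ)) * aco s μ i (k+1)) (k+1) (i+1) t := by
      rw [Finset.sum_range_succ]
      rw [aco_eq_zero s μ i (i+1) (by omega)]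
      simp only [mul_zero]
      rw [show T s μ K lam 0 (i+1) (i+1) t = 0 by unfold T; ring, add_zero]
      refine Finset.sum_congr rfl fun k _ => ?_
      push_cast
      ring_nf
    rw [e2]
    have e3 : ∀ k : ℕ, T s μ K lam ((-(μ/2) * (((k:ℕ)+1 : ℕ):ℝ) - (i:ℝ)) * aco s μ i (k+1))
          (k+1) (i+1) t
        = T s μ K lam ((-(μ/2) * ((k+1 : ℕ):ℝ) - (i:ℝ)) * aco s μ i (k+1)) (k+1) (i+1) t :=
      fun k => rfl
    have e4 : T s μ K lam ((-(μ/2) * ((0:ℕ):ℝ) - (i:ℝ)) * aco s μ i 0) 0 (i+1) t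
        = T s μ K lam (aco s μ (i+1) 0) 0 (i+1) t := by
      rw [show aco s μ (i+1) 0 = (-(i:ℝ)) * aco s μ i 0 from rfl]
      unfold T; push_cast; ring
    rw [e4]
    ring


lemma deriv_bound (s μ : ℝ) (n : ℕ) :
    ∃ A : ℝ, 1 ≤ A ∧ ∀ K lam : ℝ, 0 < K → 0 ≤ lam → ∀ i ≤ n, ∀ t : ℝ, 0 < t →
      |iteratedDeriv i (fun t : ℝ => (lam + K * t ^ (-(μ/2))) ^ (s/2)) t|
        ≤ A * (lam + K * t ^ (-(μ/2))) ^ (s/2) * t ^ (-(i:ℝ)) := by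
  refine ⟨1 + ∑ j ∈ Finset.range (n+1), ∑ k ∈ Finset.range (j+1), |aco s μ j k|, ?_, ?_⟩
  · have : (0:ℝ) ≤ ∑ j ∈ Finset.range (n+1), ∑ k ∈ Finset.range (j+1), |aco s μ j k| :=
      Finset.sum_nonneg fun j _ => Finset.sum_nonneg fun k _ => abs_nonneg _
    linarith
  intro K lam hK hlam i hi t ht
  have hP : (0:ℝ) < t ^ (-(μ/2)) := rpow_pos_of_pos ht _
  have hW : (0:ℝ) < K * t ^ (-(μ/2)) := by positivity
  have hU : (0:ℝ) < lam + K * t ^ (-(μ/2)) := by positivity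
  have hUs : (0:ℝ) < (lam + K * t ^ (-(μ/2))) ^ (s/2) := rpow_pos_of_pos hU _
  have hTi : (0:ℝ) < t ^ (-(i:ℝ)) := rpow_pos_of_pos ht _
  rw [iteratedDeriv_formula s μ K lam hK hlam i t ht]
  calc |∑ k ∈ Finset.range (i+1), T s μ K lam (aco s μ i k) k i t|
      ≤ ∑ k ∈ Finset.range (i+1), |T s μ K lam (aco s μ i k) k i t| :=
        Finset.abs_sum_le_sum_abs _ _
    _ ≤ ∑ k ∈ Finset.range (i+1),
          |aco s μ i k| * ((lam + K * t ^ (-(μ/2))) ^ (s/2) * t ^ (-(i:ℝ))) := by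
        refine Finset.sum_le_sum fun k _ => ?_
        unfold T
        rw [abs_mul, abs_mul, abs_mul]
        have h1 : |(lam + K * t ^ (-(μ/2))) ^ (s/2 - (k:ℝ))|
            = (lam + K * t ^ (-(μ/2))) ^ (s/2 - (k:ℝ)) := abs_of_pos (rpow_pos_of_pos hU _)
        have h2 : |(K * t ^ (-(μ/2)))^k| = (K * t ^ (-(μ/2)))^k := abs_of_pos (pow_pos hW _)
        have h3 : |t ^ (-(i:ℝ))| = t ^ (-(i:ℝ)) := abs_of_pos hTi
        rw [h1, h2, h3]
        have key : (lam + K * t ^ (-(μ/2))) ^ (s/2 - (k:ℝ)) * (K * t ^ (-(μ/2)))^k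
            ≤ (lam + K * t ^ (-(μ/2))) ^ (s/2) := by
          have hWU : (K * t ^ (-(μ/2)))^k ≤ (lam + K * t ^ (-(μ/2)))^k :=
            pow_le_pow_left₀ hW.le (by linarith) k
          calc (lam + K * t ^ (-(μ/2))) ^ (s/2 - (k:ℝ)) * (K * t ^ (-(μ/2)))^k
              ≤ (lam + K * t ^ (-(μ/2))) ^ (s/2 - (k:ℝ)) * (lam + K * t ^ (-(μ/2)))^k := by
                exact mul_le_mul_of_nonneg_left hWU (rpow_pos_of_pos hU _).le
            _ = (lam + K * t ^ (-(μ/2))) ^ (s/2) := by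
                rw [← Real.rpow_natCast (lam + K * t ^ (-(μ/2))) k, ← Real.rpow_add hU]
                ring_nf
        calc |aco s μ i k| * (lam + K * t ^ (-(μ/2))) ^ (s/2 - (k:ℝ)) * (K * t ^ (-(μ/2)))^k
              * t ^ (-(i:ℝ))
            ≤ |aco s μ i k| * (lam + K * t ^ (-(μ/2))) ^ (s/2) * t ^ (-(i:ℝ)) := by
              have := mul_le_mul_of_nonneg_left key (abs_nonneg (aco s μ i k))
              rw [← mul_assoc] at this
              exact mul_le_mul_of_nonneg_right this hTi.le
          _ = |aco s μ i k| * ((lam + K * t ^ (-(μ/2))) ^ (s/2) * t ^ (-(i:ℝ))) := by ring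
    _ = (∑ k ∈ Finset.range (i+1), |aco s μ i k|)
          * ((lam + K * t ^ (-(μ/2))) ^ (s/2) * t ^ (-(i:ℝ))) := by
        rw [Finset.sum_mul]
    _ ≤ (1 + ∑ j ∈ Finset.range (n+1), ∑ k ∈ Finset.range (j+1), |aco s μ j k|)
          * ((lam + K * t ^ (-(μ/2))) ^ (s/2) * t ^ (-(i:ℝ))) := by
        refine mul_le_mul_of_nonneg_right ?_ (by positivity)
        have hmem : i ∈ Finset.range (n+1) := Finset.mem_range.2 (by omega)
        have := Finset.single_le_sum
          (f := fun j => ∑ k ∈ Finset.range (j+1), |aco s μ j k|)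
          (fun j _ => Finset.sum_nonneg fun k _ => abs_nonneg _) hmem
        linarith
    _ = (1 + ∑ j ∈ Finset.range (n+1), ∑ k ∈ Finset.range (j+1), |aco s μ j k|)
          * (lam + K * t ^ (-(μ/2))) ^ (s/2) * t ^ (-(i:ℝ)) := by ring


lemma sqrt_rpow_neg (μ q : ℝ) (hq : 0 < q) : Real.sqrt q ^ (-μ) = q ^ (-(μ/2)) := by
  rw [Real.sqrt_eq_rpow, ← Real.rpow_mul hq.le]
  norm_num
  ring_nf

lemma gcont (s μ K lam : ℝ) (hK : 0 < K) (hlam : 0 ≤ lam) (N : WithTop ℕ∞) :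
    ContDiffOn ℝ N (fun t : ℝ => (lam + K * t ^ (-(μ/2))) ^ (s/2)) (Ioi 0) := by
  intro t ht
  have ht' : (0:ℝ) < t := ht
  have hP : (0:ℝ) < t ^ (-(μ/2)) := rpow_pos_of_pos ht' _
  have h1 : ContDiffAt ℝ N (fun t : ℝ => lam + K * t ^ (-(μ/2))) t :=
    contDiffAt_const.add
      (contDiffAt_const.mul (Real.contDiffAt_rpow_const_of_ne ht'.ne'))
  exact (h1.rpow_const_of_ne (by positivity)).contDiffWithinAt
variable {d : ℕ}

lemma v_fderiv (c : ℝ) :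
    fderiv ℝ (fun y : EuclideanSpace ℝ (Fin d) => c⁻¹ * (‖y‖^2 + 1))
      = fun x => ((c⁻¹ • (2 • innerSL ℝ)) : EuclideanSpace ℝ (Fin d) →L[ℝ]
          EuclideanSpace ℝ (Fin d) →L[ℝ] ℝ) x := by
  funext x
  have h : HasFDerivAt (fun y : EuclideanSpace ℝ (Fin d) => c⁻¹ * (‖y‖^2 + 1))
      (c⁻¹ • (2 • innerSL ℝ x)) x := by
    have h0 : HasFDerivAt (fun y : EuclideanSpace ℝ (Fin d) => ‖y‖^2 + 1)
        (2 • innerSL ℝ x) x := (hasStrictFDerivAt_norm_sq x).hasFDerivAt.add_const 1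
    exact h0.const_mul c⁻¹
  rw [h.fderiv]
  rfl

lemma A_apply_norm (c : ℝ) (hc : 0 < c) (x : EuclideanSpace ℝ (Fin d)) :
    ‖((c⁻¹ • (2 • innerSL ℝ)) : EuclideanSpace ℝ (Fin d) →L[ℝ]
        EuclideanSpace ℝ (Fin d) →L[ℝ] ℝ) x‖ ≤ 2 / c * ‖x‖ := by
  refine ContinuousLinearMap.opNorm_le_bound _ (by positivity) fun z => ?_
  have e : ((c⁻¹ • (2 • innerSL ℝ)) : EuclideanSpace ℝ (Fin d) →L[ℝ]
      EuclideanSpace ℝ (Fin d) →L[ℝ] ℝ) x z = c⁻¹ * ((inner ℝ x z : ℝ) + (inner ℝ x z : ℝ)) := by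
    simp [two_smul]
    rw [innerSL_apply_apply]
    ring
  rw [e, Real.norm_eq_abs, abs_mul, abs_of_pos (by positivity : (0:ℝ) < c⁻¹)]
  have hin : |(inner ℝ x z : ℝ)| ≤ ‖x‖ * ‖z‖ := abs_real_inner_le_norm x z
  have habs : |(inner ℝ x z : ℝ) + (inner ℝ x z : ℝ)| ≤ 2 * (‖x‖ * ‖z‖) := by
    calc |(inner ℝ x z : ℝ) + (inner ℝ x z : ℝ)| ≤ |(inner ℝ x z : ℝ)| + |(inner ℝ x z : ℝ)| := abs_add_le _ _
      _ ≤ 2 * (‖x‖ * ‖z‖) := by linarith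
  calc c⁻¹ * |(inner ℝ x z : ℝ) + (inner ℝ x z : ℝ)| ≤ c⁻¹ * (2 * (‖x‖ * ‖z‖)) := by
        exact mul_le_mul_of_nonneg_left habs (by positivity)
    _ = 2 / c * ‖x‖ * ‖z‖ := by field_simp

lemma A_norm (c : ℝ) (hc : 0 < c) :
    ‖((c⁻¹ • (2 • innerSL ℝ)) : EuclideanSpace ℝ (Fin d) →L[ℝ]
        EuclideanSpace ℝ (Fin d) →L[ℝ] ℝ)‖ ≤ 2 / c :=
  ContinuousLinearMap.opNorm_le_bound _ (by positivity) (A_apply_norm c hc)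

lemma v_bound (x₀ : EuclideanSpace ℝ (Fin d)) (i : ℕ) (hi : 1 ≤ i) :
    ‖iteratedFDeriv ℝ i (fun y : EuclideanSpace ℝ (Fin d) =>
        (‖x₀‖^2 + 1)⁻¹ * (‖y‖^2 + 1)) x₀‖
      ≤ (2 / Real.sqrt (‖x₀‖^2 + 1)) ^ i := by
  have hc : (0:ℝ) < ‖x₀‖^2 + 1 := by positivity
  have hJ1 : 1 ≤ Real.sqrt (‖x₀‖^2 + 1) := by
    have := Real.sqrt_le_sqrt (show (1:ℝ) ≤ ‖x₀‖^2 + 1 by nlinarith [sq_nonneg ‖x₀‖])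
    rwa [Real.sqrt_one] at this
  have hJ0 : (0:ℝ) < Real.sqrt (‖x₀‖^2 + 1) := lt_of_lt_of_le one_pos hJ1
  have hJsq : Real.sqrt (‖x₀‖^2 + 1) ^ 2 = ‖x₀‖^2 + 1 := Real.sq_sqrt hc.le
  have hxJ : ‖x₀‖ ≤ Real.sqrt (‖x₀‖^2 + 1) := by
    have := Real.sqrt_le_sqrt (show ‖x₀‖^2 ≤ ‖x₀‖^2 + 1 by linarith)
    rwa [Real.sqrt_sq (norm_nonneg _)] at this
  match i, hi with
  | 1, _ =>
    rw [← norm_iteratedFDeriv_fderiv (n := 0), norm_iteratedFDeriv_zero,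
      v_fderiv (‖x₀‖^2 + 1)]
    calc ‖((( ‖x₀‖^2 + 1)⁻¹ • (2 • innerSL ℝ)) : EuclideanSpace ℝ (Fin d) →L[ℝ]
            EuclideanSpace ℝ (Fin d) →L[ℝ] ℝ) x₀‖
        ≤ 2 / (‖x₀‖^2 + 1) * ‖x₀‖ := A_apply_norm _ hc x₀
      _ ≤ (2 / Real.sqrt (‖x₀‖^2 + 1)) ^ 1 := by
          rw [pow_one]
          rw [div_mul_eq_mul_div, div_le_div_iff₀ hc hJ0]
          nlinarith
  | (i+2), _ =>
    rw [← norm_iteratedFDeriv_fderiv (n := i+1), v_fderiv (‖x₀‖^2 + 1),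
      ← norm_iteratedFDeriv_fderiv (n := i)]
    rw [show fderiv ℝ (((( ‖x₀‖^2 + 1)⁻¹ • (2 • innerSL ℝ)) : EuclideanSpace ℝ (Fin d) →L[ℝ]
          EuclideanSpace ℝ (Fin d) →L[ℝ] ℝ) : EuclideanSpace ℝ (Fin d) →
            (EuclideanSpace ℝ (Fin d) →L[ℝ] ℝ))
        = fun _ => ((( ‖x₀‖^2 + 1)⁻¹ • (2 • innerSL ℝ)) : EuclideanSpace ℝ (Fin d) →L[ℝ]
          EuclideanSpace ℝ (Fin d) →L[ℝ] ℝ)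
      from funext fun y => ContinuousLinearMap.fderiv _]
    match i with
    | 0 =>
      rw [norm_iteratedFDeriv_zero]
      calc _ ≤ 2 / (‖x₀‖^2 + 1) := A_norm _ hc
        _ ≤ (2 / Real.sqrt (‖x₀‖^2 + 1)) ^ 2 := by
            rw [div_pow, hJsq, div_le_div_iff₀ hc hc]
            nlinarith
    | (i+1) =>
      rw [iteratedFDeriv_const_of_ne (by omega)]
      simp only [Pi.zero_apply, norm_zero]
      positivity

end S10

/-- for `μ ∈ (0,2)`, `K > 0`, `f_λ(x) = (λ + K⟨x⟩^{-μ})^{1/2}`, `s ∈ ℝ`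
and every derivative order `n` (multi-index derivatives of order `n` being encoded by
the `n`-th iterated Fréchet derivative) there is `C = C(n, s, μ, K) > 0`, independent
of `λ ≥ 0`, with `|∂^α (f_λ^s)(x)| ≤ C f_λ(x)^s ⟨x⟩^{-n}` for all `x`. -/
theorem stmt10 (d : ℕ) (μ K : ℝ) (hμ0 : 0 < μ) (hμ2 : μ < 2) (hK : 0 < K)
    (s : ℝ) (n : ℕ) :
    ∃ C > (0 : ℝ), ∀ lam : ℝ, 0 ≤ lam → ∀ x : EuclideanSpace ℝ (Fin d),
      ‖iteratedFDeriv ℝ n (fun y => (lam + K * jap y ^ (-μ)) ^ (s / 2)) x‖ ≤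
        C * (lam + K * jap x ^ (-μ)) ^ (s / 2) * jap x ^ (-(n : ℝ)) := by
  classical
  obtain ⟨A, hA1, hA⟩ := S10.deriv_bound s μ n
  have hA0 : (0:ℝ) < A := lt_of_lt_of_le one_pos hA1
  refine ⟨(n.factorial : ℝ) * A * 2^n, by positivity, ?_⟩
  intro lam hlam x₀
  have hc : (0:ℝ) < ‖x₀‖^2 + 1 := by positivity
  set c : ℝ := ‖x₀‖^2 + 1 with hcdef
  have hJ0 : (0:ℝ) < Real.sqrt c := Real.sqrt_pos.2 hc
  have hJsq : Real.sqrt c ^ 2 = c := Real.sq_sqrt hc.le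
  set K' : ℝ := K * c ^ (-(μ/2)) with hK'def
  have hK' : 0 < K' := by
    have := Real.rpow_pos_of_pos hc (-(μ/2)); positivity
  -- the function as a composition
  set g : ℝ → ℝ := fun t : ℝ => (lam + K' * t ^ (-(μ/2))) ^ (s/2) with hgdef
  set v : EuclideanSpace ℝ (Fin d) → ℝ := fun y => c⁻¹ * (‖y‖^2 + 1) with hvdef
  have hfun : (fun y : EuclideanSpace ℝ (Fin d) => (lam + K * jap y ^ (-μ)) ^ (s / 2))
      = g ∘ v := by
    funext y
    have hq : (0:ℝ) < ‖y‖^2 + 1 := by positivity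
    have e1 : jap y ^ (-μ) = (‖y‖^2 + 1) ^ (-(μ/2)) := S10.sqrt_rpow_neg μ _ hq
    have e2 : K' * (c⁻¹ * (‖y‖^2 + 1)) ^ (-(μ/2)) = K * (‖y‖^2 + 1) ^ (-(μ/2)) := by
      rw [Real.mul_rpow (by positivity) hq.le, Real.inv_rpow hc.le, hK'def]
      have hne : c ^ (-(μ/2)) ≠ 0 := (Real.rpow_pos_of_pos hc _).ne'
      field_simp
    simp only [hgdef, hvdef, Function.comp_apply, e1, e2]
  have hjapx : jap x₀ = Real.sqrt c := rfl
  have hKjap : K' = K * jap x₀ ^ (-μ) := by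
    rw [hjapx, S10.sqrt_rpow_neg μ c hc, hK'def]
  have hu0 : (0:ℝ) < lam + K * jap x₀ ^ (-μ) := by
    rw [← hKjap]; positivity
  -- apply the composition bound
  have hcomp := norm_iteratedFDerivWithin_comp_le
    (𝕜 := ℝ) (g := g) (f := v) (n := n) (N := (n : ℕ∞))
    (S10.gcont s μ K' lam hK' hlam _)
    ((contDiff_const.mul ((contDiff_norm_sq ℝ).add contDiff_const)).contDiffOn)
    (le_refl _)
    (isOpen_Ioi.uniqueDiffOn) (uniqueDiffOn_univ)
    (fun y _ => show v y ∈ Ioi (0:ℝ) by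
      simp only [hvdef, mem_Ioi]; positivity)
    (mem_univ x₀)
    (C := A * (lam + K * jap x₀ ^ (-μ)) ^ (s/2))
    (D := 2 / Real.sqrt c)
    (fun i hi => by
      have hv0 : v x₀ = 1 := by
        simp only [hvdef, ← hcdef]
        exact inv_mul_cancel₀ hc.ne'
      rw [hv0, iteratedFDerivWithin_of_isOpen i isOpen_Ioi (by norm_num : (1:ℝ) ∈ Ioi 0),
        norm_iteratedFDeriv_eq_norm_iteratedDeriv, Real.norm_eq_abs]
      have hb := hA K' lam hK' hlam i hi 1 one_pos
      rw [Real.one_rpow, Real.one_rpow, mul_one, mul_one] at hb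
      calc |iteratedDeriv i g 1| ≤ A * (lam + K') ^ (s/2) := hb
        _ = A * (lam + K * jap x₀ ^ (-μ)) ^ (s/2) := by rw [hKjap])
    (fun i hi1 hin => by
      rw [iteratedFDerivWithin_univ]
      exact S10.v_bound x₀ i hi1)
  rw [iteratedFDerivWithin_univ, ← hfun] at hcomp
  refine hcomp.trans (le_of_eq ?_)
  have hjapn : jap x₀ ^ (-(n:ℝ)) = (Real.sqrt c ^ n)⁻¹ := by
    rw [hjapx, ← Real.rpow_natCast (Real.sqrt c) n, ← Real.rpow_neg (Real.sqrt_nonneg _)]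
  rw [hjapn, div_pow]
  field_simp
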